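/- arXiv:2203.06923 — 2 statements merged into one kernel-verified Lean document; each statement's English description precedes it below -/
import Mathlib

section
/- The kernel E(x,ρ) := c(n,s) ρ (1-|x|^2)^s / ((ρ^2-1)^s (ρ^2-|x|^2)) satisfies ∫_1^∞ E(x,ρ) dρ = 1/|∂B_1| for every x in the open unit ball, where |∂B_1| = 2π^{n/2}/Γ(n/2). -/
open scoped Real
open MeasureTheory Set

lemma beta_val {s : ℝ} (hs0 : 0 < s) (hs1 : s < 1) :
    ∫ t in Set.Ioo (0:ℝ) 1, t ^ (-s) * (1-t) ^ (s-1) = π / Real.sin (π * s) := by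
  have hu : 0 < Complex.re (1 - (s:ℂ)) := by simp; linarith
  have hv : 0 < Complex.re (s:ℂ) := by simpa using hs0
  have hc := Complex.Gamma_mul_Gamma_eq_betaIntegral hu hv
  have hid : Complex.betaIntegral (1 - (s:ℂ)) s
      = ((∫ t in (0:ℝ)..1, t ^ (-s) * (1-t) ^ (s-1) : ℝ) : ℂ) := by
    rw [Complex.betaIntegral, ← intervalIntegral.integral_ofReal]
    refine intervalIntegral.integral_congr fun t ht => ?_
    rw [Set.uIcc_of_le (by norm_num : (0:ℝ) ≤ 1)] at ht
    obtain ⟨ht0, ht1⟩ := ht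
    push_cast
    rw [Complex.ofReal_cpow ht0, Complex.ofReal_cpow (by linarith : (0:ℝ) ≤ 1 - t)]
    push_cast
    rw [show (1 - (s:ℂ) - 1) = -s by ring]
  rw [hid] at hc
  have h1s : Complex.Gamma (1 - (s:ℂ)) = Real.Gamma (1 - s) := by
    rw [← Complex.Gamma_ofReal]; push_cast; ring_nf
  rw [h1s, Complex.Gamma_ofReal] at hc
  have hone : (1 - (s:ℂ)) + s = 1 := by ring
  rw [hone, Complex.Gamma_one, one_mul] at hc
  have hreal : Real.Gamma (1 - s) * Real.Gamma s
      = ∫ t in (0:ℝ)..1, t ^ (-s) * (1-t) ^ (s-1) := by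
    exact_mod_cast hc
  rw [intervalIntegral.integral_of_le (by norm_num : (0:ℝ) ≤ 1),
      MeasureTheory.integral_Ioc_eq_integral_Ioo] at hreal
  rw [← hreal, mul_comm, Real.Gamma_mul_Gamma_one_sub]

theorem stmt_12 (n : ℕ) (hn : 2 ≤ n) (s : ℝ) (hs : s ∈ Set.Ioo (0 : ℝ) 1)
    (x : EuclideanSpace ℝ (Fin n)) (hx : ‖x‖ < 1) :
    (∫ ρ in Set.Ioi (1 : ℝ),
        (Real.Gamma (n / 2) * Real.sin (π * s) / π ^ ((n : ℝ) / 2 + 1)) *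
          ρ * (1 - ‖x‖ ^ 2) ^ s / ((ρ ^ 2 - 1) ^ s * (ρ ^ 2 - ‖x‖ ^ 2)))
    = 1 / (2 * π ^ ((n : ℝ) / 2) / Real.Gamma (n / 2)) := by
  obtain ⟨hs0, hs1⟩ := hs
  set r : ℝ := ‖x‖ with hrdef
  have hr0 : 0 ≤ r := norm_nonneg x
  have hr2 : r ^ 2 < 1 := by nlinarith
  have h1r : 0 < 1 - r ^ 2 := by linarith
  set C : ℝ := Real.Gamma (n / 2) * Real.sin (π * s) / π ^ ((n : ℝ) / 2 + 1) with hC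
  set f : ℝ → ℝ := fun ρ => (ρ ^ 2 - 1) / (ρ ^ 2 - r ^ 2) with hf
  set f' : ℝ → ℝ := fun ρ => 2 * ρ * (1 - r ^ 2) / (ρ ^ 2 - r ^ 2) ^ 2 with hf'
  have hb : ∀ ρ : ℝ, 1 < ρ → 0 < ρ ^ 2 - r ^ 2 := fun ρ hρ => by nlinarith
  have ha : ∀ ρ : ℝ, 1 < ρ → 0 < ρ ^ 2 - 1 := fun ρ hρ => by nlinarith
  -- image of f
  have himg : f '' Set.Ioi 1 = Set.Ioo (0:ℝ) 1 := by
    ext t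
    constructor
    · rintro ⟨ρ, hρ, rfl⟩
      have hρ1 : (1:ℝ) < ρ := hρ
      have hb' := hb ρ hρ1
      have ha' := ha ρ hρ1
      constructor
      · exact div_pos ha' hb'
      · rw [div_lt_one hb']; linarith
    · rintro ⟨ht0, ht1⟩
      have h1t : 0 < 1 - t := by linarith
      have hnum : 0 < 1 - t * r ^ 2 := by nlinarith
      refine ⟨Real.sqrt ((1 - t * r ^ 2) / (1 - t)), ?_, ?_⟩
      · have hgt : (1:ℝ) < (1 - t * r ^ 2) / (1 - t) := by
          rw [lt_div_iff₀ h1t]; nlinarith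
        exact (Real.lt_sqrt (by norm_num)).mpr (by rw [one_pow]; exact hgt)
      · have hsq : (Real.sqrt ((1 - t * r ^ 2) / (1 - t))) ^ 2 = (1 - t * r ^ 2) / (1 - t) :=
          Real.sq_sqrt (by positivity)
        simp only [hf, hsq]
        have hden : (1 - t * r ^ 2) / (1 - t) - r ^ 2 = (1 - r ^ 2) / (1 - t) := by
          field_simp; ring
        have hnum2 : (1 - t * r ^ 2) / (1 - t) - 1 = t * (1 - r ^ 2) / (1 - t) := by
          field_simp; ring
        rw [hnum2, hden, div_div_div_eq,
          div_eq_iff (by positivity : ((1 - t) * (1 - r ^ 2)) ≠ 0)]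
        ring
  -- injectivity
  have hinj : Set.InjOn f (Set.Ioi 1) := by
    intro a haI b hbI h
    have ha1 : (1:ℝ) < a := haI
    have hb1 : (1:ℝ) < b := hbI
    have h1 := hb a ha1
    have h2 := hb b hb1
    rw [hf, div_eq_div_iff h1.ne' h2.ne'] at h
    have h3 : (1 - r ^ 2) * (a ^ 2 - b ^ 2) = 0 := by linear_combination h
    have h4 : a ^ 2 = b ^ 2 := by
      rcases mul_eq_zero.mp h3 with h5 | h5
      · linarith
      · linarith
    have h6 : (a - b) * (a + b) = 0 := by linear_combination h4
    rcases mul_eq_zero.mp h6 with h7 | h7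
    · linarith
    · linarith
  -- derivative
  have hderiv : ∀ ρ ∈ Set.Ioi (1:ℝ), HasDerivWithinAt f (f' ρ) (Set.Ioi 1) ρ := by
    intro ρ hρ
    have hρ1 : (1:ℝ) < ρ := hρ
    have hb' := hb ρ hρ1
    have h1 : HasDerivAt (fun ρ : ℝ => ρ ^ 2 - 1) (2 * ρ) ρ := by
      simpa using ((hasDerivAt_pow 2 ρ).sub_const 1)
    have h2 : HasDerivAt (fun ρ : ℝ => ρ ^ 2 - r ^ 2) (2 * ρ) ρ := by
      simpa using ((hasDerivAt_pow 2 ρ).sub_const (r ^ 2))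
    have h3 := h1.div h2 hb'.ne'
    have h4 : HasDerivAt f (f' ρ) ρ := by
      refine h3.congr_deriv ?_
      rw [hf']
      field_simp
      ring
    exact h4.hasDerivWithinAt
  have hsub := MeasureTheory.integral_image_eq_integral_abs_deriv_smul measurableSet_Ioi hderiv
    hinj (fun t => t ^ (-s) * (1-t) ^ (s-1))
  rw [himg] at hsub
  -- pointwise identity on Ioi 1
  have hpt : ∀ ρ ∈ Set.Ioi (1:ℝ),
      C * ρ * (1 - r ^ 2) ^ s / ((ρ ^ 2 - 1) ^ s * (ρ ^ 2 - r ^ 2))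
        = (C / 2) * (|f' ρ| • ((f ρ) ^ (-s) * (1 - f ρ) ^ (s-1))) := by
    intro ρ hρ
    have hρ1 : (1:ℝ) < ρ := hρ
    have hρ0 : 0 < ρ := by linarith
    have hb' := hb ρ hρ1
    have ha' := ha ρ hρ1
    have hfp : 0 < f' ρ := by rw [hf']; positivity
    have h1f : 1 - f ρ = (1 - r ^ 2) / (ρ ^ 2 - r ^ 2) := by
      rw [hf]; field_simp; ring
    rw [smul_eq_mul, abs_of_pos hfp, h1f, hf, hf']
    rw [Real.div_rpow ha'.le hb'.le, Real.div_rpow h1r.le hb'.le,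
        Real.rpow_neg ha'.le, Real.rpow_neg hb'.le]
    have e3 : (ρ ^ 2 - r ^ 2) ^ s = (ρ ^ 2 - r ^ 2) * (ρ ^ 2 - r ^ 2) ^ (s-1) := by
      have h := Real.rpow_add hb' 1 (s-1)
      rw [Real.rpow_one, show (1:ℝ) + (s-1) = s by ring] at h
      exact h
    have e4 : (1 - r ^ 2) ^ s = (1 - r ^ 2) * (1 - r ^ 2) ^ (s-1) := by
      have h := Real.rpow_add h1r 1 (s-1)
      rw [Real.rpow_one, show (1:ℝ) + (s-1) = s by ring] at h
      exact h
    have hA := Real.rpow_pos_of_pos ha' s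
    have hB1 := Real.rpow_pos_of_pos hb' (s-1)
    have hR1 := Real.rpow_pos_of_pos h1r (s-1)
    rw [e3, e4]
    field_simp
  -- assemble
  have hsin : 0 < Real.sin (π * s) := by
    apply Real.sin_pos_of_pos_of_lt_pi
    · positivity
    · nlinarith [Real.pi_pos]
  have hΓ : 0 < Real.Gamma ((n:ℝ) / 2) := by
    apply Real.Gamma_pos_of_pos
    have : 0 < n := by omega
    positivity
  have hpow : π ^ ((n : ℝ) / 2 + 1) = π ^ ((n : ℝ) / 2) * π := by
    rw [Real.rpow_add Real.pi_pos, Real.rpow_one]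
  have hpgt : 0 < π ^ ((n : ℝ) / 2) := Real.rpow_pos_of_pos Real.pi_pos _
  rw [MeasureTheory.setIntegral_congr_fun measurableSet_Ioi hpt,
    MeasureTheory.integral_const_mul, ← hsub, beta_val hs0 hs1, hC, hpow]
  field_simp
end

section
/- Optimality of the Harnack constants via concentrating data: fix e ∈ ∂B_1, r ∈ (0,1), and for ε > 0 let u_ε(x) := c(n,s)(1-|x|^2)^s ∫_{B_ε((1+ε)e)} |y-x|^{-n} dy. Then u_ε(0)/u_ε(-re) → (1+r)^n/(1-r^2)^s as ε → 0. -/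
open scoped Real Topology
open MeasureTheory Metric Filter

lemma aux_int_bounds (n : ℕ) (a cc : EuclideanSpace ℝ (Fin n)) {ε : ℝ} (hε : 0 < ε)
    (hd : ε < ‖cc - a‖) :
    (volume (ball cc ε)).toReal * ((‖cc - a‖ + ε) ^ n)⁻¹ ≤
        (∫ y in ball cc ε, (‖y - a‖ ^ n)⁻¹) ∧
      (∫ y in ball cc ε, (‖y - a‖ ^ n)⁻¹) ≤
        (volume (ball cc ε)).toReal * ((‖cc - a‖ - ε) ^ n)⁻¹ := by
  have hd0 : 0 < ‖cc - a‖ - ε := by linarith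
  have hmem : ∀ y ∈ closedBall cc ε, ‖cc - a‖ - ε ≤ ‖y - a‖ ∧ ‖y - a‖ ≤ ‖cc - a‖ + ε := by
    intro y hy
    rw [mem_closedBall, dist_eq_norm] at hy
    constructor
    · have h1 : ‖cc - a‖ - ‖cc - y‖ ≤ ‖(cc - a) - (cc - y)‖ := norm_sub_norm_le _ _
      have h2 : (cc - a) - (cc - y) = y - a := by abel
      have h3 : ‖cc - y‖ ≤ ε := by rwa [norm_sub_rev]
      rw [h2] at h1; linarith
    · have h1 : ‖(y - cc) + (cc - a)‖ ≤ ‖y - cc‖ + ‖cc - a‖ := norm_add_le _ _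
      have h2 : (y - cc) + (cc - a) = y - a := by abel
      rw [h2] at h1; linarith
  have hcont : ContinuousOn (fun y : EuclideanSpace ℝ (Fin n) => (‖y - a‖ ^ n)⁻¹)
      (closedBall cc ε) := by
    apply ContinuousOn.inv₀
    · exact (((continuous_id.sub continuous_const).norm).pow n).continuousOn
    · intro y hy
      exact (pow_pos (lt_of_lt_of_le hd0 (hmem y hy).1) n).ne'
  have hInt : IntegrableOn (fun y : EuclideanSpace ℝ (Fin n) => (‖y - a‖ ^ n)⁻¹)
      (ball cc ε) := (hcont.integrableOn_compact (isCompact_closedBall _ _)).mono_set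
      ball_subset_closedBall
  constructor
  · calc (volume (ball cc ε)).toReal * ((‖cc - a‖ + ε) ^ n)⁻¹
        = ∫ _ in ball cc ε, ((‖cc - a‖ + ε) ^ n)⁻¹ := by
          rw [setIntegral_const, smul_eq_mul]; rfl
      _ ≤ ∫ y in ball cc ε, (‖y - a‖ ^ n)⁻¹ := by
          apply setIntegral_mono_on (integrableOn_const measure_ball_lt_top.ne) hInt
            measurableSet_ball
          intro y hy
          have h := hmem y (ball_subset_closedBall hy)
          have hy0 : 0 < ‖y - a‖ := lt_of_lt_of_le hd0 h.1
          exact inv_anti₀ (pow_pos hy0 n) (pow_le_pow_left₀ hy0.le h.2 n)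
  · calc (∫ y in ball cc ε, (‖y - a‖ ^ n)⁻¹)
        ≤ ∫ _ in ball cc ε, ((‖cc - a‖ - ε) ^ n)⁻¹ := by
          apply setIntegral_mono_on hInt (integrableOn_const measure_ball_lt_top.ne)
            measurableSet_ball
          intro y hy
          have h := hmem y (ball_subset_closedBall hy)
          exact inv_anti₀ (pow_pos hd0 n) (pow_le_pow_left₀ hd0.le h.1 n)
      _ = _ := by rw [setIntegral_const, smul_eq_mul]; rfl

theorem stmt_19 (n : ℕ) (hn : 2 ≤ n) (s r : ℝ) (hs : s ∈ Set.Ioo (0 : ℝ) 1)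
    (hr : r ∈ Set.Ioo (0 : ℝ) 1) (e : EuclideanSpace ℝ (Fin n)) (he : ‖e‖ = 1) :
    let c := Real.Gamma (n / 2) * Real.sin (π * s) / π ^ ((n : ℝ) / 2 + 1)
    let u : ℝ → EuclideanSpace ℝ (Fin n) → ℝ := fun ε x =>
      c * (1 - ‖x‖ ^ 2) ^ s *
        ∫ y in Metric.ball ((1 + ε) • e) ε, (‖y - x‖ ^ n)⁻¹
    Filter.Tendsto (fun ε => u ε 0 / u ε (-(r • e))) (𝓝[>] (0 : ℝ))
      (𝓝 ((1 + r) ^ n / (1 - r ^ 2) ^ s)) := by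
  intro c u
  obtain ⟨hs0, hs1⟩ := hs
  obtain ⟨hr0, hr1⟩ := hr
  have hu : ∀ ε x, u ε x = c * (1 - ‖x‖ ^ 2) ^ s *
      ∫ y in Metric.ball ((1 + ε) • e) ε, (‖y - x‖ ^ n)⁻¹ := fun _ _ => rfl
  have hr2 : (0:ℝ) < 1 - r ^ 2 := by nlinarith
  set k : ℝ := (1 - r ^ 2) ^ s with hkdef
  have hk : 0 < k := Real.rpow_pos_of_pos hr2 s
  have hn2 : (2:ℝ) ≤ (n:ℝ) := by exact_mod_cast hn
  have hc : 0 < c := by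
    apply div_pos (mul_pos (Real.Gamma_pos_of_pos (by linarith)) ?_)
      (Real.rpow_pos_of_pos Real.pi_pos _)
    exact Real.sin_pos_of_pos_of_lt_pi (by positivity)
      (mul_lt_of_lt_one_right Real.pi_pos hs1)
  -- squeeze
  apply tendsto_of_tendsto_of_tendsto_of_le_of_le'
    (g := fun ε : ℝ => ((1 + r) ^ n / (1 + ε + ε) ^ n) / k)
    (h := fun ε : ℝ => (1 + ε + r + ε) ^ n / k)
  · -- lower tendsto
    have hca : ContinuousAt (fun ε : ℝ => ((1 + r) ^ n / (1 + ε + ε) ^ n) / k) 0 := by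
      apply ContinuousAt.div _ continuousAt_const hk.ne'
      exact ContinuousAt.div continuousAt_const (by fun_prop) (by norm_num)
    have := hca.tendsto.mono_left (nhdsWithin_le_nhds : 𝓝[>](0:ℝ) ≤ 𝓝 0)
    simpa using this
  · -- upper tendsto
    have hca : ContinuousAt (fun ε : ℝ => (1 + ε + r + ε) ^ n / k) 0 := by
      apply ContinuousAt.div (by fun_prop) continuousAt_const hk.ne'
    have := hca.tendsto.mono_left (nhdsWithin_le_nhds : 𝓝[>](0:ℝ) ≤ 𝓝 0)
    simpa using this
  · -- lower eventual bound
    filter_upwards [self_mem_nhdsWithin] with ε (hε : 0 < ε)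
    set A : ℝ := ∫ y in Metric.ball ((1 + ε) • e) ε, (‖y - (0 : EuclideanSpace ℝ (Fin n))‖ ^ n)⁻¹ with hAdef
    set B : ℝ := ∫ y in Metric.ball ((1 + ε) • e) ε, (‖y - (-(r • e))‖ ^ n)⁻¹ with hBdef
    have hnA : ‖(1 + ε) • e - (0 : EuclideanSpace ℝ (Fin n))‖ = 1 + ε := by
      rw [sub_zero, norm_smul, he, mul_one, Real.norm_eq_abs, abs_of_pos (by linarith)]
    have hnB : ‖(1 + ε) • e - (-(r • e))‖ = 1 + ε + r := by
      rw [sub_neg_eq_add, ← add_smul, norm_smul, he, mul_one, Real.norm_eq_abs,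
        abs_of_pos (by linarith)]
    set V : ℝ := (volume (ball ((1 + ε) • e) ε)).toReal with hVdef
    have hV : 0 < V :=
      ENNReal.toReal_pos (measure_ball_pos volume _ hε).ne' measure_ball_lt_top.ne
    have hA := aux_int_bounds n 0 ((1 + ε) • e) hε (by rw [hnA]; linarith)
    rw [hnA] at hA
    have hB := aux_int_bounds n (-(r • e)) ((1 + ε) • e) hε (by rw [hnB]; linarith)
    rw [hnB] at hB
    have e1 : (1 + ε - ε : ℝ) = 1 := by ring
    have e2 : (1 + ε + r - ε : ℝ) = 1 + r := by ring
    rw [e1, one_pow, inv_one, mul_one] at hA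
    rw [e2] at hB
    have hApos : 0 < A := lt_of_lt_of_le (by positivity) hA.1
    have hBpos : 0 < B := lt_of_lt_of_le (by positivity) hB.1
    have heq : u ε 0 / u ε (-(r • e)) = (A / B) / k := by
      rw [hu, hu]
      have h0 : (1 : ℝ) - ‖(0 : EuclideanSpace ℝ (Fin n))‖ ^ 2 = 1 := by simp
      have hx : (1 : ℝ) - ‖(-(r • e) : EuclideanSpace ℝ (Fin n))‖ ^ 2 = 1 - r ^ 2 := by
        rw [norm_neg, norm_smul, he, mul_one, Real.norm_eq_abs, abs_of_pos hr0]
      rw [h0, hx, Real.one_rpow, ← hkdef, ← hAdef, ← hBdef]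
      field_simp
    rw [heq, div_le_div_iff_of_pos_right hk]
    calc (1 + r) ^ n / (1 + ε + ε) ^ n
        = (V * ((1 + ε + ε) ^ n)⁻¹) / (V * ((1 + r) ^ n)⁻¹) := by
          rw [div_eq_div_iff (pow_pos (by linarith : (0:ℝ) < 1 + ε + ε) n).ne'
            (mul_pos hV (inv_pos.2 (pow_pos (by linarith : (0:ℝ) < 1 + r) n))).ne']
          field_simp
      _ ≤ A / B := div_le_div₀ hApos.le hA.1 hBpos hB.2
  · -- upper eventual bound
    filter_upwards [self_mem_nhdsWithin] with ε (hε : 0 < ε)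
    set A : ℝ := ∫ y in Metric.ball ((1 + ε) • e) ε, (‖y - (0 : EuclideanSpace ℝ (Fin n))‖ ^ n)⁻¹ with hAdef
    set B : ℝ := ∫ y in Metric.ball ((1 + ε) • e) ε, (‖y - (-(r • e))‖ ^ n)⁻¹ with hBdef
    have hnA : ‖(1 + ε) • e - (0 : EuclideanSpace ℝ (Fin n))‖ = 1 + ε := by
      rw [sub_zero, norm_smul, he, mul_one, Real.norm_eq_abs, abs_of_pos (by linarith)]
    have hnB : ‖(1 + ε) • e - (-(r • e))‖ = 1 + ε + r := by
      rw [sub_neg_eq_add, ← add_smul, norm_smul, he, mul_one, Real.norm_eq_abs,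
        abs_of_pos (by linarith)]
    set V : ℝ := (volume (ball ((1 + ε) • e) ε)).toReal with hVdef
    have hV : 0 < V :=
      ENNReal.toReal_pos (measure_ball_pos volume _ hε).ne' measure_ball_lt_top.ne
    have hA := aux_int_bounds n 0 ((1 + ε) • e) hε (by rw [hnA]; linarith)
    rw [hnA] at hA
    have hB := aux_int_bounds n (-(r • e)) ((1 + ε) • e) hε (by rw [hnB]; linarith)
    rw [hnB] at hB
    have e1 : (1 + ε - ε : ℝ) = 1 := by ring
    have e2 : (1 + ε + r - ε : ℝ) = 1 + r := by ring
    rw [e1, one_pow, inv_one, mul_one] at hA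
    rw [e2] at hB
    have hApos : 0 < A := lt_of_lt_of_le (by positivity) hA.1
    have hBpos : 0 < B := lt_of_lt_of_le (by positivity) hB.1
    have heq : u ε 0 / u ε (-(r • e)) = (A / B) / k := by
      rw [hu, hu]
      have h0 : (1 : ℝ) - ‖(0 : EuclideanSpace ℝ (Fin n))‖ ^ 2 = 1 := by simp
      have hx : (1 : ℝ) - ‖(-(r • e) : EuclideanSpace ℝ (Fin n))‖ ^ 2 = 1 - r ^ 2 := by
        rw [norm_neg, norm_smul, he, mul_one, Real.norm_eq_abs, abs_of_pos hr0]
      rw [h0, hx, Real.one_rpow, ← hkdef, ← hAdef, ← hBdef]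
      field_simp
    rw [heq, div_le_div_iff_of_pos_right hk]
    calc A / B
        ≤ V / (V * ((1 + ε + r + ε) ^ n)⁻¹) :=
          div_le_div₀ hV.le hA.2
            (mul_pos hV (inv_pos.2 (pow_pos (by linarith : (0:ℝ) < 1 + ε + r + ε) n))) hB.1
      _ = (1 + ε + r + ε) ^ n := by field_simp
end
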